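/- arXiv:2502.10165 — 5 statements merged into one kernel-verified Lean document; each statement's English description precedes it below -/
import Mathlib

section
/- Let x* be a non-zero lattice homomorphism (real-valued) on a Banach lattice X and x₀ a positive atom with coordinate functional. If x*(x₀) > 0, then the disjoint complement of x₀ (the band x₀^d) is contained in the kernel of x*, and consequently x* is a positive multiple of the coordinate functional of x₀. -/
/-- A real-valued lattice homomorphism on a Banach lattice. -/
def IsLatticeHomFunctional {X : Type*} [NormedAddCommGroup X] [Lattice X] [HasSolidNorm X] [IsOrderedAddMonoid X] [NormedSpace ℝ X]
    (f : X →L[ℝ] ℝ) : Prop :=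
  ∀ x y : X, f (x ⊔ y) = max (f x) (f y)

/-- An atom of a Banach lattice: a positive element generating a one-dimensional ideal. -/
def IsLatAtom {X : Type*} [NormedAddCommGroup X] [Lattice X] [HasSolidNorm X] [IsOrderedAddMonoid X] [NormedSpace ℝ X] (x₀ : X) : Prop :=
  0 < x₀ ∧ ∀ y : X, 0 ≤ y → y ≤ x₀ → ∃ r : ℝ, y = r • x₀

/-- `l` is the coordinate functional of the atom `x₀`: the band projection onto the span of
`x₀` is `x ↦ l x • x₀`, i.e. `x - l x • x₀` is disjoint from `x₀` for every `x`. -/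
def IsCoordinateFunctional {X : Type*} [NormedAddCommGroup X] [Lattice X] [HasSolidNorm X] [IsOrderedAddMonoid X] [NormedSpace ℝ X]
    (l : X →L[ℝ] ℝ) (x₀ : X) : Prop :=
  ∀ x : X, |x - l x • x₀| ⊓ x₀ = 0

/-- An equivalent lattice norm on `X`. -/
structure LatticeNorm (X : Type*) [NormedAddCommGroup X] [Lattice X] [NormedSpace ℝ X] where
  n : X → ℝ
  add_le : ∀ x y : X, n (x + y) ≤ n x + n y
  smul_eq : ∀ (r : ℝ) (x : X), n (r • x) = |r| * n x
  eq_zero_of : ∀ x : X, n x = 0 → x = 0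
  mono : ∀ x y : X, |x| ≤ |y| → n x ≤ n y
  lower : ∃ c : ℝ, 0 < c ∧ ∀ x : X, c * ‖x‖ ≤ n x
  upper : ∃ C : ℝ, 0 < C ∧ ∀ x : X, n x ≤ C * ‖x‖

/-- if a non-zero lattice homomorphism is strictly positive at an atom `x₀`
(having a coordinate functional `l`), then the disjoint complement of `x₀` is contained in
its kernel and it is a positive multiple of `l`. -/
theorem latticeHom_pos_at_atom_eq_multiple_of_coordinate_functional
    {X : Type*} [NormedAddCommGroup X] [Lattice X] [HasSolidNorm X] [IsOrderedAddMonoid X] [NormedSpace ℝ X] [CompleteSpace X]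
    (f : X →L[ℝ] ℝ) (hf : IsLatticeHomFunctional f) (hf0 : f ≠ 0)
    (x₀ : X) (hx₀ : IsLatAtom x₀) (l : X →L[ℝ] ℝ) (hl : IsCoordinateFunctional l x₀)
    (hpos : 0 < f x₀) :
    (∀ x : X, |x| ⊓ x₀ = 0 → f x = 0) ∧ ∃ c : ℝ, 0 < c ∧ f = c • l := by
  have hinf : ∀ a b : X, f (a ⊓ b) = min (f a) (f b) := by
    intro a b
    have h1 : a ⊓ b = -(-a ⊔ -b) := by rw [neg_sup, neg_neg, neg_neg]
    rw [h1, map_neg, hf, map_neg, map_neg]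
    rw [neg_sup, neg_neg, neg_neg]
  have habs : ∀ x : X, f |x| = |f x| := by
    intro x
    have h1 : |x| = x ⊔ -x := rfl
    rw [h1, hf, map_neg, abs_eq_max_neg]
  have hker : ∀ x : X, |x| ⊓ x₀ = 0 → f x = 0 := by
    intro x hx
    have h0 : min (f |x|) (f x₀) = 0 := by rw [← hinf, hx, map_zero]
    have hnn : 0 ≤ f |x| := by rw [habs]; exact abs_nonneg _
    have h1 : f |x| = 0 := by
      by_contra h
      have h2 : 0 < min (f |x|) (f x₀) := lt_min (lt_of_le_of_ne hnn (Ne.symm h)) hpos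
      rw [h0] at h2; exact lt_irrefl 0 h2
    rw [habs] at h1
    exact abs_eq_zero.mp h1
  refine ⟨hker, f x₀, hpos, ?_⟩
  ext x
  have h2 : f (x - l x • x₀) = 0 := hker _ (hl x)
  have : f x - l x * f x₀ = 0 := by
    simpa [map_sub, map_smul, smul_eq_mul] using h2
  simp only [ContinuousLinearMap.smul_apply, smul_eq_mul]
  linarith
end

section
/- Every nonzero lattice homomorphism on an order continuous Banach lattice is a positive multiple of the coordinate functional of an atom; in particular it attains its norm. -/
/-- A Banach lattice has order continuous norm if every downward directed set with infimum
`0` contains elements of arbitrarily small norm (equivalently, the corresponding decreasing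
net converges to `0` in norm). -/
def HasOrderContinuousNorm (X : Type*) [NormedAddCommGroup X] [Lattice X] [HasSolidNorm X] [IsOrderedAddMonoid X] [NormedSpace ℝ X] : Prop :=
  ∀ S : Set X, S.Nonempty → DirectedOn (· ≥ ·) S → IsGLB S 0 →
    ∀ ε : ℝ, 0 < ε → ∃ x ∈ S, ‖x‖ < ε

section Aux
variable {X : Type*} [NormedAddCommGroup X] [Lattice X] [HasSolidNorm X] [IsOrderedAddMonoid X] [NormedSpace ℝ X]

lemma half_smul_nonneg {x : X} (hx : 0 ≤ x) : 0 ≤ (2⁻¹ : ℝ) • x := by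
  set y := (2⁻¹ : ℝ) • x with hy
  have hyy : y + y = x := by
    rw [hy, ← two_smul ℝ, smul_smul]; norm_num
  have h1 : -y ≤ y := by
    rw [← sub_nonneg, sub_neg_eq_add, hyy]; exact hx
  have h2 : y⁻ ≤ y⁺ := by
    rw [negPart_def, posPart_def]; exact sup_le_sup_right h1 0
  have h3 : y⁻ = 0 := by
    have := posPart_inf_negPart_eq_zero y
    rwa [inf_eq_right.2 h2] at this
  exact negPart_eq_zero.1 h3

lemma pow2_inv_smul_nonneg (n : ℕ) {x : X} (hx : 0 ≤ x) :
    0 ≤ ((2 ^ n : ℝ)⁻¹) • x := by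
  induction n with
  | zero => simpa using hx
  | succ n ih =>
      have : ((2 ^ (n+1) : ℝ))⁻¹ • x = (2⁻¹ : ℝ) • ((2 ^ n : ℝ)⁻¹ • x) := by
        rw [smul_smul, pow_succ]; ring_nf
      rw [this]; exact half_smul_nonneg ih

lemma real_smul_nonneg {r : ℝ} (hr : 0 ≤ r) {x : X} (hx : 0 ≤ x) : 0 ≤ r • x := by
  have hd : ∀ n : ℕ, 0 ≤ ((⌊r * 2 ^ n⌋₊ : ℝ) / 2 ^ n) • x := by
    intro n
    have : ((⌊r * 2 ^ n⌋₊ : ℝ) / 2 ^ n) • x = ⌊r * 2 ^ n⌋₊ • (((2 ^ n : ℝ))⁻¹ • x) := by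
      rw [← Nat.cast_smul_eq_nsmul ℝ, smul_smul]; ring_nf
    rw [this]
    exact nsmul_nonneg (pow2_inv_smul_nonneg n hx) _
  have htend : Filter.Tendsto (fun n : ℕ => ((⌊r * 2 ^ n⌋₊ : ℝ) / 2 ^ n)) Filter.atTop (nhds r) := by
    rw [tendsto_iff_dist_tendsto_zero]
    apply squeeze_zero (fun n => dist_nonneg) (g := fun n : ℕ => (2 ^ n : ℝ)⁻¹)
    · intro n
      have h2 : (0:ℝ) < 2 ^ n := by positivity
      have hle : (⌊r * 2 ^ n⌋₊ : ℝ) ≤ r * 2 ^ n := Nat.floor_le (by positivity)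
      have hgt : r * 2 ^ n - 1 < (⌊r * 2 ^ n⌋₊ : ℝ) := Nat.sub_one_lt_floor _
      have hd1 : (⌊r * 2 ^ n⌋₊ : ℝ) / 2 ^ n ≤ r := by
        rw [div_le_iff₀ h2]; exact hle
      have hd2 : r - (2 ^ n : ℝ)⁻¹ ≤ (⌊r * 2 ^ n⌋₊ : ℝ) / 2 ^ n := by
        rw [le_div_iff₀ h2, sub_mul, inv_mul_cancel₀ h2.ne']
        linarith
      have hpos : (0:ℝ) ≤ (2 ^ n : ℝ)⁻¹ := by positivity
      rw [Real.dist_eq, abs_le]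
      constructor <;> [linarith; linarith]
    · simpa using tendsto_pow_atTop_nhds_zero_of_lt_one (by norm_num : (0:ℝ) ≤ 2⁻¹)
        (by norm_num : (2⁻¹:ℝ) < 1)
  have htend2 : Filter.Tendsto (fun n : ℕ => ((⌊r * 2 ^ n⌋₊ : ℝ) / 2 ^ n) • x)
      Filter.atTop (nhds (r • x)) := htend.smul tendsto_const_nhds
  have hclosed : IsClosed {w : X | 0 ≤ w} := isClosed_le continuous_const continuous_id
  exact hclosed.mem_of_tendsto htend2 (Filter.Eventually.of_forall hd)

lemma real_smul_le_smul {r : ℝ} (hr : 0 ≤ r) {a b : X} (h : a ≤ b) : r • a ≤ r • b := by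
  have := real_smul_nonneg hr (sub_nonneg.2 h)
  rw [smul_sub] at this
  exact sub_nonneg.1 this

end Aux

open Filter Topology

/-- every nonzero lattice homomorphism on an order continuous Banach lattice is
a positive multiple of the coordinate functional of an atom; in particular it attains its
norm. -/
theorem latticeHom_on_orderContinuous_is_coordinate_functional_and_attains_norm
    {X : Type*} [NormedAddCommGroup X] [Lattice X] [HasSolidNorm X] [IsOrderedAddMonoid X] [NormedSpace ℝ X] [CompleteSpace X]
    (hX : HasOrderContinuousNorm X)
    (f : X →L[ℝ] ℝ) (hf : IsLatticeHomFunctional f) (hf0 : f ≠ 0) :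
    (∃ (x₀ : X) (l : X →L[ℝ] ℝ) (c : ℝ),
      IsLatAtom x₀ ∧ IsCoordinateFunctional l x₀ ∧ 0 < c ∧ f = c • l) ∧
    ∃ x : X, ‖x‖ ≤ 1 ∧ f x = ‖f‖ := by
  -- basic facts about f
  have fmono : ∀ {a b : X}, a ≤ b → f a ≤ f b := by
    intro a b h
    have h2 := hf a b
    rw [sup_eq_right.2 h] at h2
    rw [h2]; exact le_max_left _ _
  have fabs : ∀ x : X, f |x| = |f x| := by
    intro x
    have habs : |x| = x ⊔ -x := rfl
    rw [habs, hf, map_neg, abs_eq_max_neg]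
  have finf : ∀ a b : X, f (a ⊓ b) = min (f a) (f b) := by
    intro a b
    have h1 : f (a ⊓ b) + f (a ⊔ b) = f a + f b := by
      rw [← map_add, inf_add_sup]
      exact map_add f a b
    have h2 : min (f a) (f b) + max (f a) (f b) = f a + f b := by
      rw [min_add_max]
    rw [hf] at h1
    linarith
  -- construct u ≥ 0 with f u = 1
  obtain ⟨x₁, hx₁⟩ : ∃ x, f x ≠ 0 := by
    by_contra h
    push_neg at h
    exact hf0 (ContinuousLinearMap.ext fun x => by simp [h x])
  have ht₁ : 0 < f |x₁| := by rw [fabs]; exact abs_pos.2 hx₁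
  set u : X := (f |x₁|)⁻¹ • |x₁| with hu
  have hu0 : 0 ≤ u := real_smul_nonneg (inv_nonneg.2 ht₁.le) (abs_nonneg x₁)
  have hfu : f u = 1 := by
    rw [hu, map_smul, smul_eq_mul, inv_mul_cancel₀ ht₁.ne']
  -- the set A
  set A : Set X := {v | 0 ≤ v ∧ v ≤ u ∧ f v = 1} with hA
  have huA : u ∈ A := ⟨hu0, le_refl u, hfu⟩
  have hAinf : ∀ a ∈ A, ∀ b ∈ A, a ⊓ b ∈ A := fun a ha b hb =>
    ⟨le_inf ha.1 hb.1, inf_le_left.trans ha.2.1,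
      by rw [finf, ha.2.2, hb.2.2, min_self]⟩
  have hAclosed : IsClosed A := by
    have : A = {v : X | 0 ≤ v} ∩ ({v : X | v ≤ u} ∩ (f ⁻¹' {1})) := by
      ext v; simp [hA, and_assoc]
    rw [this]
    exact (isClosed_le continuous_const continuous_id).inter
      ((isClosed_le continuous_id continuous_const).inter
        (isClosed_singleton.preimage f.continuous))
  -- lower bounds of A
  set L : Set X := {y | ∀ a ∈ A, y ≤ a} with hL
  have h0L : (0 : X) ∈ L := fun a ha => ha.1
  have hLsup : ∀ y₁ ∈ L, ∀ y₂ ∈ L, y₁ ⊔ y₂ ∈ L := fun y₁ h₁ y₂ h₂ a ha =>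
    sup_le (h₁ a ha) (h₂ a ha)
  -- the difference set
  set S : Set X := {s | ∃ x ∈ A, ∃ y ∈ L, s = x - y} with hS
  have huS : u ∈ S := ⟨u, huA, 0, h0L, by rw [sub_zero]⟩
  have hSdir : DirectedOn (· ≥ ·) S := by
    rintro s₁ ⟨a₁, ha₁, b₁, hb₁, rfl⟩ s₂ ⟨a₂, ha₂, b₂, hb₂, rfl⟩
    refine ⟨a₁ ⊓ a₂ - b₁ ⊔ b₂, ⟨a₁ ⊓ a₂, hAinf _ ha₁ _ ha₂, b₁ ⊔ b₂, hLsup _ hb₁ _ hb₂, rfl⟩,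
      sub_le_sub inf_le_left le_sup_left, sub_le_sub inf_le_right le_sup_right⟩
  have hglb : IsGLB S 0 := by
    constructor
    · rintro s ⟨a, ha, b, hb, rfl⟩
      exact sub_nonneg.2 (hb a ha)
    · intro z hz
      have key : ∀ n : ℕ, ∀ y ∈ L, y + n • z ∈ L := by
        intro n
        induction n with
        | zero => intro y hy; simpa using hy
        | succ n ih =>
            intro y hy a ha
            have h2 : z ≤ a - (y + n • z) := hz ⟨a, ha, y + n • z, ih y hy, rfl⟩
            have h3 : z + (y + n • z) ≤ a := le_sub_iff_add_le.1 h2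
            calc y + (n + 1) • z = z + (y + n • z) := by rw [succ_nsmul]; abel
              _ ≤ a := h3
      have hn : ∀ n : ℕ, n • z ≤ u := by
        intro n
        have := key n 0 h0L u huA
        simpa using this
      have hzn : ∀ n : ℕ, z ≤ ((n : ℝ) + 1)⁻¹ • u := by
        intro n
        have hpos : (0:ℝ) < (n : ℝ) + 1 := by positivity
        have h1 : ((n : ℝ) + 1) • z ≤ u := by
          have := hn (n + 1)
          rwa [← Nat.cast_smul_eq_nsmul ℝ, Nat.cast_add, Nat.cast_one] at this
        calc z = ((n : ℝ) + 1)⁻¹ • (((n : ℝ) + 1) • z) := by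
              rw [smul_smul, inv_mul_cancel₀ hpos.ne', one_smul]
          _ ≤ ((n : ℝ) + 1)⁻¹ • u := real_smul_le_smul (inv_nonneg.2 hpos.le) h1
      have htend : Tendsto (fun n : ℕ => ((n : ℝ) + 1)⁻¹ • u) atTop (𝓝 0) := by
        have hb : ∀ n : ℕ, ‖((n : ℝ) + 1)⁻¹ • u‖ ≤ ((n : ℝ) + 1)⁻¹ * ‖u‖ := by
          intro n
          rw [norm_smul, Real.norm_eq_abs, abs_of_nonneg (by positivity)]
        refine squeeze_zero_norm hb ?_
        have h1 := tendsto_one_div_add_atTop_nhds_zero_nat.mul_const ‖u‖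
        simpa [one_div] using h1
      exact ge_of_tendsto' htend hzn
  -- extract sequences
  have hseq : ∀ n : ℕ, ∃ x ∈ A, ∃ y ∈ L, ‖x - y‖ < 1 / ((n : ℝ) + 1) := by
    intro n
    obtain ⟨s, hs, hns⟩ := hX S ⟨u, huS⟩ hSdir hglb (1 / ((n : ℝ) + 1)) (by positivity)
    obtain ⟨x, hx, y, hy, rfl⟩ := hs
    exact ⟨x, hx, y, hy, hns⟩
  choose xs hxs ys hys hnorm using hseq
  -- monotone envelope sequences
  set g : ℕ → X × X := fun n =>
    Nat.rec (xs 0, ys 0) (fun n p => (p.1 ⊓ xs (n + 1), p.2 ⊔ ys (n + 1))) n with hg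
  set x' : ℕ → X := fun n => (g n).1 with hx'
  set y' : ℕ → X := fun n => (g n).2 with hy'
  have hgs : ∀ n, g (n + 1) = ((g n).1 ⊓ xs (n + 1), (g n).2 ⊔ ys (n + 1)) := fun n => rfl
  have hx'A : ∀ n, x' n ∈ A := by
    intro n; induction n with
    | zero => exact hxs 0
    | succ n ih => exact hAinf _ ih _ (hxs (n + 1))
  have hy'L : ∀ n, y' n ∈ L := by
    intro n; induction n with
    | zero => exact hys 0
    | succ n ih => exact hLsup _ ih _ (hys (n + 1))
  have hx'anti : Antitone x' := antitone_nat_of_succ_le fun n => inf_le_left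
  have hy'mono : Monotone y' := monotone_nat_of_le_succ fun n => le_sup_left
  have hx'lexs : ∀ n, x' n ≤ xs n := by
    intro n; cases n with
    | zero => exact le_refl _
    | succ n => exact inf_le_right
  have hy'ge : ∀ n, ys n ≤ y' n := by
    intro n; cases n with
    | zero => exact le_refl _
    | succ n => exact le_sup_right
  have hdiff_nonneg : ∀ n, 0 ≤ x' n - y' n := fun n =>
    sub_nonneg.2 (hy'L n _ (hx'A n))
  have norm_le_of_nonneg_le : ∀ {a b : X}, 0 ≤ a → a ≤ b → ‖a‖ ≤ ‖b‖ := by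
    intro a b ha hab
    apply HasSolidNorm.solid
    rw [abs_of_nonneg ha, abs_of_nonneg (ha.trans hab)]
    exact hab
  have hbound : ∀ n, ‖x' n - y' n‖ < 1 / ((n : ℝ) + 1) := by
    intro n
    have h1 : x' n - y' n ≤ xs n - ys n := sub_le_sub (hx'lexs n) (hy'ge n)
    exact lt_of_le_of_lt (norm_le_of_nonneg_le (hdiff_nonneg n) h1) (hnorm n)
  have hdistb : ∀ n m N : ℕ, N ≤ n → N ≤ m → dist (x' n) (x' m) ≤ 1 / ((N : ℝ) + 1) := by
    have hle : ∀ n m N : ℕ, N ≤ n → N ≤ m → m ≤ n → dist (x' n) (x' m) ≤ 1 / ((N : ℝ) + 1) := by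
      intro n m N hn hm hmn
      have h0 : 0 ≤ x' m - x' n := sub_nonneg.2 (hx'anti hmn)
      have h1 : x' m - x' n ≤ x' N - y' N :=
        sub_le_sub (hx'anti hm) ((hy'mono hn).trans (sub_nonneg.1 (hdiff_nonneg n)))
      have h2 := (norm_le_of_nonneg_le h0 h1).trans (hbound N).le
      rw [dist_comm, dist_eq_norm]
      exact h2
    intro n m N hn hm
    rcases le_total m n with h | h
    · exact hle n m N hn hm h
    · rw [dist_comm]; exact hle m n N hm hn h
  have hcauchy : CauchySeq x' :=
    cauchySeq_of_le_tendsto_0 (fun N => 1 / ((N : ℝ) + 1))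
      (fun n m N hn hm => hdistb n m N hn hm) tendsto_one_div_add_atTop_nhds_zero_nat
  obtain ⟨z, hz⟩ := cauchySeq_tendsto_of_complete hcauchy
  have hzA : z ∈ A := hAclosed.mem_of_tendsto hz (Filter.Eventually.of_forall hx'A)
  have hdtend : Tendsto (fun n => x' n - y' n) atTop (𝓝 0) :=
    squeeze_zero_norm (fun n => (hbound n).le) tendsto_one_div_add_atTop_nhds_zero_nat
  have hy'tend : Tendsto y' atTop (𝓝 z) := by
    have h1 := hz.sub hdtend
    simpa using h1
  have hzmin : ∀ a ∈ A, z ≤ a := fun a ha =>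
    le_of_tendsto hy'tend (Filter.Eventually.of_forall fun n => hy'L n a ha)
  have hz0 : 0 ≤ z := hzA.1
  have hfz : f z = 1 := hzA.2.2
  -- key lemma K
  have hK : ∀ e : X, 0 ≤ e → e ≤ z → f e = 0 → e = 0 := by
    intro e he0 hez hfe
    have h1 : z - e ∈ A :=
      ⟨sub_nonneg.2 hez, (sub_le_self z he0).trans hzA.2.1,
        by rw [map_sub, hfz, hfe, sub_zero]⟩
    have h2 : z ≤ z - e := hzmin _ h1
    have h3 : e ≤ 0 := by
      have := sub_nonneg.2 h2
      rwa [sub_sub_cancel_left, neg_nonneg] at this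
    exact le_antisymm h3 he0
  -- key lemma M
  have fpos : ∀ {y : X}, 0 ≤ y → 0 ≤ f y := by
    intro y hy
    have := fmono hy
    rwa [map_zero] at this
  have hM : ∀ y : X, 0 ≤ y → (f y) • z ≤ y := by
    intro y hy
    rcases eq_or_lt_of_le (fpos hy) with h | h
    · rw [← h, zero_smul]; exact hy
    · set w : X := (f y)⁻¹ • y with hw
      have hw0 : 0 ≤ w := real_smul_nonneg (inv_nonneg.2 h.le) hy
      have hfw : f w = 1 := by rw [hw, map_smul, smul_eq_mul, inv_mul_cancel₀ h.ne']
      have hwzA : w ⊓ z ∈ A :=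
        ⟨le_inf hw0 hz0, inf_le_right.trans hzA.2.1,
          by rw [finf, hfw, hfz, min_self]⟩
      have h1 : z ≤ w := (hzmin _ hwzA).trans inf_le_left
      calc (f y) • z ≤ (f y) • w := real_smul_le_smul h.le h1
        _ = y := by rw [hw, smul_inv_smul₀ h.ne']
  -- z is an atom
  have hzne : z ≠ 0 := by
    intro h
    rw [h, map_zero] at hfz
    exact one_ne_zero hfz.symm
  have hatom : IsLatAtom z := by
    refine ⟨lt_of_le_of_ne hz0 (Ne.symm hzne), fun y hy hyz => ⟨f y, ?_⟩⟩
    have htz : (f y) • z ≤ y := hM y hy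
    have ht1 : f y ≤ 1 := by rw [← hfz]; exact fmono hyz
    have he0 : 0 ≤ y - (f y) • z := sub_nonneg.2 htz
    have hez : y - (f y) • z ≤ z :=
      (sub_le_sub_right hyz _).trans (sub_le_self z (real_smul_nonneg (fpos hy) hz0))
    have hfe : f (y - (f y) • z) = 0 := by
      rw [map_sub, map_smul, smul_eq_mul, hfz, mul_one, sub_self]
    have := hK _ he0 hez hfe
    rw [sub_eq_zero] at this
    exact this
  -- f is the coordinate functional of z
  have hcoord : IsCoordinateFunctional f z := by
    intro x
    have he0 : 0 ≤ |x - f x • z| ⊓ z := le_inf (abs_nonneg _) hz0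
    have hez : |x - f x • z| ⊓ z ≤ z := inf_le_right
    have hfe : f (|x - f x • z| ⊓ z) = 0 := by
      rw [finf, fabs, map_sub, map_smul, smul_eq_mul, hfz, mul_one, sub_self, abs_zero]
      simp [hfz]
    exact hK _ he0 hez hfe
  refine ⟨⟨z, f, 1, hatom, hcoord, one_pos, (one_smul ℝ f).symm⟩, ?_⟩
  -- norm attainment
  have hznorm : (0:ℝ) < ‖z‖ := norm_pos_iff.2 hzne
  have hople : ‖f‖ ≤ ‖z‖⁻¹ := by
    apply f.opNorm_le_bound (inv_nonneg.2 hznorm.le)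
    intro x
    have h1 : (f |x|) • z ≤ |x| := hM _ (abs_nonneg x)
    have h2 : ‖(f |x|) • z‖ ≤ ‖x‖ := by
      have h3 := norm_le_of_nonneg_le (real_smul_nonneg (fpos (abs_nonneg x)) hz0) h1
      rwa [norm_abs_eq_norm] at h3
    rw [norm_smul, Real.norm_eq_abs, abs_of_nonneg (fpos (abs_nonneg x))] at h2
    rw [Real.norm_eq_abs, ← fabs]
    rw [inv_mul_eq_div, le_div_iff₀ hznorm]
    linarith [h2]
  refine ⟨‖z‖⁻¹ • z, ?_, ?_⟩
  · rw [norm_smul, Real.norm_eq_abs, abs_of_nonneg (inv_nonneg.2 hznorm.le),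
      inv_mul_cancel₀ hznorm.ne']
  · have hfx : f (‖z‖⁻¹ • z) = ‖z‖⁻¹ := by
      rw [map_smul, smul_eq_mul, hfz, mul_one]
    have hge : ‖z‖⁻¹ ≤ ‖f‖ := by
      have h1 := f.le_opNorm (‖z‖⁻¹ • z)
      rw [hfx, norm_smul, Real.norm_eq_abs,
        abs_of_nonneg (inv_nonneg.2 hznorm.le), inv_mul_cancel₀ hznorm.ne', mul_one] at h1
      exact h1
    rw [hfx]
    exact le_antisymm hge hople
end

section
/- Let X be a Banach lattice, x* a lattice homomorphism with ‖x*‖ = 1, and μ ∈ X* a positive functional with μ disjoint from x* in the dual lattice X*. Define the equivalent lattice norm ‖x‖_μ := ‖x‖ + μ(|x|). Then the norm of x* with respect to ‖·‖_μ equals 1, and if x* attains its ‖·‖_μ-norm at x₀ then μ(x₀) = 0. -/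
private lemma aux_pow2_reflect {X : Type*} [NormedAddCommGroup X] [Lattice X] [HasSolidNorm X] [IsOrderedAddMonoid X] :
    ∀ (k : ℕ) {u : X}, 0 ≤ 2 ^ k • u → 0 ≤ u := by
  intro k
  induction k with
  | zero => intro u h; simpa using h
  | succ k ih =>
    intro u h
    have h2 : (2 : ℕ) ^ (k + 1) • u = 2 ^ k • (2 • u) := by
      rw [smul_smul, pow_succ]
    rw [h2] at h
    exact nsmul_two_semiclosed (ih h)

private lemma aux_dyadic_smul_nonneg {X : Type*} [NormedAddCommGroup X] [Lattice X] [HasSolidNorm X] [IsOrderedAddMonoid X]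
    [NormedSpace ℝ X] (m k : ℕ) {w : X} (hw : 0 ≤ w) : 0 ≤ ((m : ℝ) / 2 ^ k) • w := by
  set u : X := ((2 : ℝ) ^ k)⁻¹ • w with hu
  have h1 : (2 ^ k : ℕ) • u = w := by
    rw [← Nat.cast_smul_eq_nsmul ℝ, hu, smul_smul]
    push_cast
    rw [mul_inv_cancel₀ (by positivity), one_smul]
  have h2 : 0 ≤ u := aux_pow2_reflect k (by rw [h1]; exact hw)
  have h3 : ((m : ℝ) / 2 ^ k) • w = (m : ℕ) • u := by
    rw [← Nat.cast_smul_eq_nsmul ℝ, hu, smul_smul, div_eq_mul_inv]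
  rw [h3]
  exact nsmul_nonneg h2 m

private lemma aux_smul_nonneg {X : Type*} [NormedAddCommGroup X] [Lattice X] [HasSolidNorm X] [IsOrderedAddMonoid X]
    [NormedSpace ℝ X] {r : ℝ} (hr : 0 ≤ r) {w : X} (hw : 0 ≤ w) : 0 ≤ r • w := by
  set s : ℕ → ℝ := fun k => (⌈r * 2 ^ k⌉₊ : ℝ) / 2 ^ k with hs
  have hsr : Filter.Tendsto s Filter.atTop (nhds r) := by
    have hlow : ∀ k, r ≤ s k := by
      intro k
      rw [hs, le_div_iff₀ (by positivity)]
      exact Nat.le_ceil _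
    have hup : ∀ k, s k ≤ r + (1 / 2 : ℝ) ^ k := by
      intro k
      rw [hs]
      have h1 : (⌈r * 2 ^ k⌉₊ : ℝ) < r * 2 ^ k + 1 :=
        Nat.ceil_lt_add_one (by positivity)
      rw [div_le_iff₀ (by positivity)]
      have : (1 / 2 : ℝ) ^ k * 2 ^ k = 1 := by
        rw [← mul_pow]; norm_num
      nlinarith [this]
    have hto : Filter.Tendsto (fun k : ℕ => r + (1 / 2 : ℝ) ^ k) Filter.atTop (nhds (r + 0)) :=
      Filter.Tendsto.const_add r
        (tendsto_pow_atTop_nhds_zero_of_lt_one (by norm_num) (by norm_num))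
    rw [add_zero] at hto
    exact tendsto_of_tendsto_of_tendsto_of_le_of_le tendsto_const_nhds hto hlow hup
  have htend : Filter.Tendsto (fun k => s k • w) Filter.atTop (nhds (r • w)) :=
    hsr.smul_const w
  exact isClosed_nonneg.mem_of_tendsto htend
    (Filter.Eventually.of_forall fun k => aux_dyadic_smul_nonneg _ k hw)

/-- for a norm-one lattice homomorphism `f` and a positive functional `μ`
disjoint from `f` (disjointness expressed via the Riesz–Kantorovich formula), the norm of
`f` with respect to the equivalent lattice norm `‖x‖_μ := ‖x‖ + μ(|x|)` equals `1`, and if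
`f` attains its `‖·‖_μ`-norm at `x₀` then `μ(x₀) = 0`. -/
theorem latticeHom_renorm_disjoint_mu
    {X : Type*} [NormedAddCommGroup X] [Lattice X] [HasSolidNorm X] [IsOrderedAddMonoid X] [NormedSpace ℝ X] [CompleteSpace X]
    (f : X →L[ℝ] ℝ) (hf : IsLatticeHomFunctional f) (hf1 : ‖f‖ = 1)
    (μ : X →L[ℝ] ℝ) (hμpos : ∀ x : X, 0 ≤ x → 0 ≤ μ x)
    (hdisj : ∀ x : X, 0 ≤ x → ∀ ε : ℝ, 0 < ε →
      ∃ y : X, 0 ≤ y ∧ y ≤ x ∧ f y + μ (x - y) < ε) :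
    (∀ x : X, ‖x‖ + μ |x| ≤ 1 → |f x| ≤ 1) ∧
    (∀ ε : ℝ, 0 < ε → ∃ x : X, ‖x‖ + μ |x| ≤ 1 ∧ 1 - ε < f x) ∧
    (∀ x₀ : X, ‖x₀‖ + μ |x₀| ≤ 1 → |f x₀| = 1 → μ x₀ = 0) := by
  have fpos : ∀ y : X, 0 ≤ y → 0 ≤ f y := by
    intro y hy
    have := hf y 0
    rw [sup_of_le_left hy, map_zero] at this
    rw [this]; exact le_max_right _ _
  have fabs : ∀ z : X, f |z| = |f z| := by
    intro z
    have := hf z (-z)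
    rw [map_neg] at this
    rw [abs, this, abs_eq_max_neg]
  have fbound : ∀ x : X, |f x| ≤ ‖x‖ := by
    intro x
    have := f.le_opNorm x
    rwa [hf1, one_mul, Real.norm_eq_abs] at this
  refine ⟨?_, ?_, ?_⟩
  · intro x hx
    have h1 : 0 ≤ μ |x| := hμpos _ (abs_nonneg x)
    have := fbound x
    linarith
  · intro ε hε
    have h14 : (1 : ℝ) - ε / 4 < ‖f‖ := by rw [hf1]; linarith
    obtain ⟨z, hz1, hz2⟩ := f.exists_lt_apply_of_lt_opNorm h14
    rw [Real.norm_eq_abs] at hz2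
    set x := |z| with hxdef
    have hx0 : (0 : X) ≤ x := abs_nonneg z
    have hxn : ‖x‖ < 1 := by rwa [hxdef, norm_abs_eq_norm]
    have hfx : 1 - ε / 4 < f x := by rw [hxdef, fabs]; exact hz2
    obtain ⟨y, hy0, hyx, hyε⟩ := hdisj x hx0 (ε / 4) (by linarith)
    have hfy : 0 ≤ f y := fpos y hy0
    have hμw : 0 ≤ μ (x - y) := hμpos _ (sub_nonneg.mpr hyx)
    set w := x - y with hwdef
    have hw0 : (0 : X) ≤ w := sub_nonneg.mpr hyx
    have hwn : ‖w‖ ≤ ‖x‖ := by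
      apply HasSolidNorm.solid
      rw [abs_of_nonneg hw0, abs_of_nonneg hx0]
      calc w = x - y := rfl
        _ ≤ x := by
          have : (0:X) ≤ y := hy0
          simpa using sub_le_self x hy0
    have hfw : 1 - ε / 2 < f w := by
      rw [hwdef, map_sub]
      have : f y < ε / 4 := by linarith
      linarith
    have hμw2 : μ w < ε / 4 := by linarith
    set c : ℝ := 1 + ε / 4 with hcdef
    have hc : 0 < c := by positivity
    have hci : 0 < c⁻¹ := inv_pos.mpr hc
    refine ⟨c⁻¹ • w, ?_, ?_⟩
    · have habs : |c⁻¹ • w| = c⁻¹ • w := abs_of_nonneg (aux_smul_nonneg hci.le hw0)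
      rw [habs, map_smul, norm_smul, Real.norm_eq_abs, abs_of_pos hci, smul_eq_mul]
      have : c⁻¹ * ‖w‖ + c⁻¹ * μ w < c⁻¹ * c := by
        rw [← mul_add]
        apply mul_lt_mul_of_pos_left _ hci
        have : ‖w‖ < 1 := lt_of_le_of_lt hwn hxn
        rw [hcdef]; linarith
      rw [inv_mul_cancel₀ hc.ne'] at this
      linarith
    · rw [map_smul, smul_eq_mul]
      have h1 : c⁻¹ * (1 - ε / 2) < c⁻¹ * f w := mul_lt_mul_of_pos_left hfw hci
      have h2 : 1 - ε < c⁻¹ * (1 - ε / 2) := by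
        rw [show c⁻¹ * (1 - ε / 2) = (1 - ε / 2) / c by ring, lt_div_iff₀ hc, hcdef]
        nlinarith
      linarith
  · intro x₀ hx₀ hfx₀
    have h1 : (1 : ℝ) ≤ ‖x₀‖ := hfx₀ ▸ fbound x₀
    have h2 : 0 ≤ μ |x₀| := hμpos _ (abs_nonneg x₀)
    have h3 : μ |x₀| = 0 := by linarith
    have h4 : μ x₀ ≤ μ |x₀| := by
      have : x₀ ≤ |x₀| := le_abs_self x₀
      have := hμpos _ (sub_nonneg.mpr this)
      rw [map_sub] at this; linarith
    have h5 : -μ x₀ ≤ μ |x₀| := by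
      have : -x₀ ≤ |x₀| := neg_le_abs x₀
      have := hμpos _ (sub_nonneg.mpr this)
      rw [map_sub, map_neg] at this; linarith
    linarith
end

section
/- Let X be a Banach lattice admitting a strictly positive functional μ (i.e., μ(x) > 0 whenever x > 0). Equip X with the equivalent lattice norm ‖x‖_μ := ‖x‖ + μ(|x|). Then every lattice homomorphism on X that attains its ‖·‖_μ-norm is a positive multiple of a coordinate functional of an atom. -/
section Aux

variable {X : Type*} [NormedAddCommGroup X] [Lattice X] [HasSolidNorm X] [IsOrderedAddMonoid X] [NormedSpace ℝ X]

/-- Iterated semiclosedness: `0 ≤ 2^k • a → 0 ≤ a`. -/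
lemma aux_pow_two_semiclosed : ∀ (k : ℕ) (a : X), 0 ≤ (2 ^ k : ℕ) • a → 0 ≤ a := by
  intro k
  induction k with
  | zero => intro a h; simpa using h
  | succ k ih =>
    intro a h
    apply ih
    apply nsmul_two_semiclosed
    rw [← mul_nsmul']
    rwa [pow_succ, mul_comm] at h

/-- Scalar multiplication by a nonnegative real preserves positivity in a normed lattice. -/
lemma aux_smul_nonneg_s8 {r : ℝ} {x : X} (hr : 0 ≤ r) (hx : 0 ≤ x) : 0 ≤ r • x := by
  -- dyadic rationals
  have hdy : ∀ (m k : ℕ), 0 ≤ ((m : ℝ) / 2 ^ k) • x := by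
    intro m k
    apply aux_pow_two_semiclosed k
    have : (2 ^ k : ℕ) • (((m : ℝ) / 2 ^ k) • x) = (m : ℕ) • x := by
      rw [← Nat.cast_smul_eq_nsmul ℝ, ← Nat.cast_smul_eq_nsmul ℝ (m) x, smul_smul]
      congr 1
      push_cast
      field_simp
    rw [this]
    exact nsmul_nonneg hx m
  -- the set of good scalars is closed
  have hS : IsClosed {t : ℝ | 0 ≤ t • x} := by
    have : Continuous fun t : ℝ => t • x := continuous_id.smul continuous_const
    exact isClosed_nonneg.preimage this
  -- approximate r by dyadics
  set u : ℕ → ℝ := fun n => (⌊r * 2 ^ n⌋₊ : ℝ) / 2 ^ n with hu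
  have hun : ∀ n, u n ∈ {t : ℝ | 0 ≤ t • x} := by
    intro n; exact hdy _ n
  have hlim : Filter.Tendsto u Filter.atTop (nhds r) := by
    have h2 : ∀ n : ℕ, (0:ℝ) < 2 ^ n := fun n => by positivity
    have hle : ∀ n, u n ≤ r := by
      intro n
      rw [hu]
      rw [div_le_iff₀ (h2 n)]
      calc (⌊r * 2 ^ n⌋₊ : ℝ) ≤ r * 2 ^ n := Nat.floor_le (by positivity)
        _ = r * 2 ^ n := rfl
    have hge : ∀ n, r - (1/2 : ℝ) ^ n ≤ u n := by
      intro n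
      rw [hu]
      rw [le_div_iff₀ (h2 n), sub_mul, one_div, inv_pow, inv_mul_cancel₀ (ne_of_gt (h2 n))]
      have := Nat.sub_one_lt_floor (r * 2 ^ n)
      linarith
    have htend : Filter.Tendsto (fun n : ℕ => r - (1/2 : ℝ) ^ n) Filter.atTop (nhds r) := by
      have : Filter.Tendsto (fun n : ℕ => (1/2 : ℝ) ^ n) Filter.atTop (nhds 0) :=
        tendsto_pow_atTop_nhds_zero_of_lt_one (by norm_num) (by norm_num)
      simpa using tendsto_const_nhds.sub this
    exact tendsto_of_tendsto_of_tendsto_of_le_of_le htend tendsto_const_nhds hge hle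
  exact hS.mem_of_tendsto hlim (Filter.Eventually.of_forall hun)

lemma aux_smul_mono {r : ℝ} {x y : X} (hr : 0 ≤ r) (hxy : x ≤ y) : r • x ≤ r • y := by
  have := aux_smul_nonneg_s8 hr (sub_nonneg.mpr hxy)
  rwa [smul_sub, sub_nonneg] at this

lemma aux_smul_sup {r : ℝ} (hr : 0 < r) (x y : X) : r • (x ⊔ y) = r • x ⊔ r • y := by
  apply le_antisymm
  · have h1 : x ≤ r⁻¹ • (r • x ⊔ r • y) := by
      have := aux_smul_mono (le_of_lt (inv_pos.mpr hr)) (le_sup_left : r • x ≤ r • x ⊔ r • y)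
      rwa [smul_smul, inv_mul_cancel₀ (ne_of_gt hr), one_smul] at this
    have h2 : y ≤ r⁻¹ • (r • x ⊔ r • y) := by
      have := aux_smul_mono (le_of_lt (inv_pos.mpr hr)) (le_sup_right : r • y ≤ r • x ⊔ r • y)
      rwa [smul_smul, inv_mul_cancel₀ (ne_of_gt hr), one_smul] at this
    have := aux_smul_mono (le_of_lt hr) (sup_le h1 h2)
    rwa [smul_smul, mul_inv_cancel₀ (ne_of_gt hr), one_smul] at this
  · exact sup_le (aux_smul_mono (le_of_lt hr) le_sup_left)
      (aux_smul_mono (le_of_lt hr) le_sup_right)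

lemma aux_abs_smul {r : ℝ} (hr : 0 < r) (x : X) : |r • x| = r • |x| := by
  have h1 : |r • x| = (r • x) ⊔ (-(r • x)) := rfl
  have h2 : |x| = x ⊔ (-x) := rfl
  rw [h1, h2, aux_smul_sup hr, smul_neg]

end Aux

set_option maxHeartbeats 2000000 in
/-- if `μ` is a strictly positive functional on a Banach lattice `X`, then for
the equivalent lattice norm `‖x‖_μ := ‖x‖ + μ(|x|)`, every nonzero lattice homomorphism
attaining its `‖·‖_μ`-norm is a positive multiple of the coordinate functional of an atom. -/
theorem latticeHom_attaining_mu_norm_is_coordinate_functional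
    {X : Type*} [NormedAddCommGroup X] [Lattice X] [HasSolidNorm X] [IsOrderedAddMonoid X] [NormedSpace ℝ X] [CompleteSpace X]
    (μ : X →L[ℝ] ℝ) (hμ : ∀ x : X, 0 < x → 0 < μ x)
    (f : X →L[ℝ] ℝ) (hf : IsLatticeHomFunctional f) (hf0 : f ≠ 0)
    (hatt : ∃ x₀ : X, ‖x₀‖ + μ |x₀| ≤ 1 ∧
      ∀ y : X, ‖y‖ + μ |y| ≤ 1 → |f y| ≤ |f x₀|) :
    ∃ (x₀ : X) (l : X →L[ℝ] ℝ) (c : ℝ),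
      IsLatAtom x₀ ∧ IsCoordinateFunctional l x₀ ∧ 0 < c ∧ f = c • l := by
  obtain ⟨x₁, hx₁, hmax₁⟩ := hatt
  -- μ is nonnegative on the positive cone
  have hμ0 : ∀ x : X, 0 ≤ x → 0 ≤ μ x := by
    intro x hx
    rcases hx.eq_or_lt with h | h
    · simp [← h]
    · exact le_of_lt (hμ x h)
  -- f is positive
  have hfpos : ∀ x : X, 0 ≤ x → 0 ≤ f x := by
    intro x hx
    have h := hf x 0
    rw [sup_eq_left.mpr hx] at h
    rw [map_zero] at h
    rw [h]
    exact le_max_right _ _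
  -- f of absolute value
  have hfabs : ∀ x : X, f |x| = |f x| := by
    intro x
    have h1 : |x| = x ⊔ (-x) := rfl
    rw [h1, hf x (-x), map_neg]
    exact (abs_eq_max_neg (a := f x)).symm
  -- f of inf
  have hfinf : ∀ x y : X, f (x ⊓ y) = min (f x) (f y) := by
    intro x y
    have h1 : x ⊓ y = -((-x) ⊔ (-y)) := by rw [neg_sup]; simp
    rw [h1, map_neg, hf, map_neg, map_neg, max_neg_neg, neg_neg]
  -- the maximizing positive element
  set a : X := |x₁| with ha_def
  have ha0 : 0 ≤ a := abs_nonneg x₁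
  have haa : |a| = a := abs_of_nonneg ha0
  have hNa : ‖a‖ + μ a ≤ 1 := by
    have h1 : ‖a‖ = ‖x₁‖ := norm_abs_eq_norm x₁
    have h2 : μ a = μ |x₁| := by rw [ha_def]
    linarith [hx₁, h1.le, h1.ge]
  have hfa : f a = |f x₁| := hfabs x₁
  have hmax : ∀ y : X, ‖y‖ + μ |y| ≤ 1 → |f y| ≤ f a := by
    intro y hy; rw [hfa]; exact hmax₁ y hy
  -- f a > 0
  have hfa_pos : 0 < f a := by
    obtain ⟨x, hx⟩ : ∃ x : X, f x ≠ 0 := by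
      by_contra h
      push_neg at h
      exact hf0 (ContinuousLinearMap.ext fun x => by simp [h x])
    set w := |x| with hw_def
    have hw0 : 0 ≤ w := abs_nonneg x
    have hfw : f w = |f x| := hfabs x
    have hfw_pos : 0 < f w := by rw [hfw]; exact abs_pos.mpr hx
    have hwne : w ≠ 0 := by
      intro h; rw [h, map_zero] at hfw_pos; exact lt_irrefl 0 hfw_pos
    have hNw_pos : 0 < ‖w‖ + μ |w| := by
      have h1 : 0 < ‖w‖ := norm_pos_iff.mpr hwne
      have h2 : 0 ≤ μ |w| := hμ0 _ (abs_nonneg w)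
      linarith
    set t : ℝ := (‖w‖ + μ |w|)⁻¹ with ht_def
    have ht_pos : 0 < t := inv_pos.mpr hNw_pos
    have hNtw : ‖t • w‖ + μ |t • w| ≤ 1 := by
      rw [norm_smul, aux_abs_smul ht_pos, map_smul, Real.norm_eq_abs,
        abs_of_pos ht_pos, smul_eq_mul, ← mul_add, ht_def,
        inv_mul_cancel₀ (ne_of_gt hNw_pos)]
    have hle := hmax _ hNtw
    have hftw : f (t • w) = t * f w := by rw [map_smul, smul_eq_mul]
    have h3 : 0 < t * f w := mul_pos ht_pos hfw_pos
    have h4 : |f (t • w)| = t * f w := by rw [hftw]; exact abs_of_pos h3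
    rw [h4] at hle
    linarith
  -- kernel claim: positive elements below a killed by f vanish
  have hker : ∀ y : X, 0 ≤ y → y ≤ a → f y = 0 → y = 0 := by
    intro y hy0 hya hfy
    by_contra hyne
    have hy_pos : 0 < y := lt_of_le_of_ne hy0 (Ne.symm hyne)
    have hμy : 0 < μ y := hμ y hy_pos
    set z : X := a - y with hz_def
    have hz0 : 0 ≤ z := sub_nonneg.mpr hya
    have hza : z ≤ a := by rw [hz_def]; simpa using hy0
    have hfz : f z = f a := by rw [hz_def, map_sub, hfy, sub_zero]
    have hNz_lt : ‖z‖ + μ |z| < 1 := by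
      have h1 : ‖z‖ ≤ ‖a‖ := by
        apply HasSolidNorm.solid
        rw [abs_of_nonneg hz0, haa]; exact hza
      have h2 : μ |z| = μ a - μ y := by
        rw [abs_of_nonneg hz0, hz_def, map_sub]
      linarith
    have hNz_pos : 0 < ‖z‖ + μ |z| := by
      have hzne : z ≠ 0 := by
        intro h; rw [h, map_zero] at hfz; exact absurd hfz.symm (ne_of_gt hfa_pos)
      have h1 : 0 < ‖z‖ := norm_pos_iff.mpr hzne
      have h2 : 0 ≤ μ |z| := hμ0 _ (abs_nonneg z)
      linarith
    set t : ℝ := (‖z‖ + μ |z|)⁻¹ with ht_def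
    have ht_pos : 0 < t := inv_pos.mpr hNz_pos
    have ht_gt : 1 < t := by
      rw [ht_def]
      exact (one_lt_inv₀ hNz_pos).mpr hNz_lt
    have hNtz : ‖t • z‖ + μ |t • z| ≤ 1 := by
      rw [norm_smul, aux_abs_smul ht_pos, map_smul, Real.norm_eq_abs,
        abs_of_pos ht_pos, smul_eq_mul, ← mul_add, ht_def,
        inv_mul_cancel₀ (ne_of_gt hNz_pos)]
    have h := hmax _ hNtz
    have hftz : f (t • z) = t * f a := by rw [map_smul, smul_eq_mul, hfz]
    have h3 : f a < t * f a := by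
      nlinarith
    rw [hftz, abs_of_pos (by positivity)] at h
    linarith
  -- scaled kernel claim
  have hker' : ∀ (M : ℝ) (y : X), 0 < M → 0 ≤ y → y ≤ M • a → f y = 0 → y = 0 := by
    intro M y hM hy0 hyM hfy
    have h1 : 0 ≤ M⁻¹ • y := aux_smul_nonneg_s8 (le_of_lt (inv_pos.mpr hM)) hy0
    have h2 : M⁻¹ • y ≤ a := by
      have := aux_smul_mono (le_of_lt (inv_pos.mpr hM)) hyM
      rwa [smul_smul, inv_mul_cancel₀ (ne_of_gt hM), one_smul] at this
    have h3 : f (M⁻¹ • y) = 0 := by rw [map_smul, smul_eq_mul, hfy, mul_zero]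
    have h4 := hker _ h1 h2 h3
    have : M • (M⁻¹ • y) = y := by
      rw [smul_smul, mul_inv_cancel₀ (ne_of_gt hM), one_smul]
    rw [← this, h4, smul_zero]
  -- a is positive (nonzero)
  have ha_pos : 0 < a := by
    rcases ha0.eq_or_lt with h | h
    · exfalso; rw [← h, map_zero] at hfa_pos; exact lt_irrefl 0 hfa_pos
    · exact h
  -- a is an atom
  have hatom : IsLatAtom a := by
    refine ⟨ha_pos, ?_⟩
    intro y hy0 hya
    refine ⟨f y / f a, ?_⟩
    set w : X := f y • a - f a • y with hw_def
    have hfw : f w = 0 := by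
      rw [hw_def, map_sub, map_smul, map_smul, smul_eq_mul, smul_eq_mul, mul_comm, sub_self]
    have hfy0 : 0 ≤ f y := hfpos y hy0
    have hfyfa : f y ≤ f a := by
      have := hfpos (a - y) (sub_nonneg.mpr hya)
      rw [map_sub] at this; linarith
    have habs_w : |w| ≤ (2 * f a) • a := by
      have h1 : |w| ≤ |f y • a| + |f a • y| := by
        calc |w| = |f y • a + (-(f a • y))| := by rw [hw_def, sub_eq_add_neg]
          _ ≤ |f y • a| + |(-(f a • y))| := abs_add_le _ _
          _ = |f y • a| + |f a • y| := by rw [abs_neg]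
      have h2 : |f y • a| = f y • a := abs_of_nonneg (aux_smul_nonneg_s8 hfy0 ha0)
      have h3 : |f a • y| = f a • y := abs_of_nonneg (aux_smul_nonneg_s8 (le_of_lt hfa_pos) hy0)
      have h4 : f y • a ≤ f a • a := by
        have := aux_smul_nonneg_s8 (sub_nonneg.mpr hfyfa) ha0
        rwa [sub_smul, sub_nonneg] at this
      have h5 : f a • y ≤ f a • a := aux_smul_mono (le_of_lt hfa_pos) hya
      calc |w| ≤ |f y • a| + |f a • y| := h1
        _ = f y • a + f a • y := by rw [h2, h3]
        _ ≤ f a • a + f a • a := add_le_add h4 h5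
        _ = (2 * f a) • a := by rw [← add_smul]; ring_nf
    have hMpos : (0:ℝ) < 2 * f a := by positivity
    -- positive part of w vanishes
    have hwp : w ⊔ 0 = 0 :=
      hker' (2 * f a) (w ⊔ 0) hMpos le_sup_right
        (le_trans (sup_le (le_abs_self w) (abs_nonneg w)) habs_w)
        (by rw [hf w 0, map_zero, hfw, max_self])
    have hwn : (-w) ⊔ 0 = 0 :=
      hker' (2 * f a) ((-w) ⊔ 0) hMpos le_sup_right
        (le_trans (sup_le (neg_le_abs w) (abs_nonneg w)) habs_w)
        (by rw [hf (-w) 0, map_zero, map_neg, hfw, neg_zero, max_self])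
    have hw0 : w = 0 := by
      have h1 : w ≤ 0 := sup_eq_right.mp hwp
      have h2 : -w ≤ 0 := sup_eq_right.mp hwn
      have h3 : 0 ≤ w := by simpa using neg_nonpos.mp h2
      exact le_antisymm h1 h3
    -- conclude y = (f y / f a) • a
    have h6 : f y • a = f a • y := by
      have := sub_eq_zero.mp (hw_def ▸ hw0)
      exact this
    have : (f a)⁻¹ • (f y • a) = (f a)⁻¹ • (f a • y) := by rw [h6]
    rw [smul_smul, smul_smul, inv_mul_cancel₀ (ne_of_gt hfa_pos), one_smul] at this
    rw [div_eq_inv_mul]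
    exact this.symm
  -- coordinate functional
  set l : X →L[ℝ] ℝ := (f a)⁻¹ • f with hl_def
  have hcoord : IsCoordinateFunctional l a := by
    intro x
    set u : X := x - l x • a with hu_def
    have hlx : l x = (f a)⁻¹ * f x := rfl
    have hfu : f u = 0 := by
      rw [hu_def, map_sub, map_smul, smul_eq_mul, hlx]
      field_simp
      ring
    set v : X := |u| ⊓ a with hv_def
    have hv0 : 0 ≤ v := le_inf (abs_nonneg u) (le_of_lt ha_pos)
    have hva : v ≤ a := inf_le_right
    have hfv : f v = 0 := by
      rw [hv_def, hfinf, hfabs, hfu, abs_zero]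
      exact min_eq_left (le_of_lt hfa_pos)
    exact hker v hv0 hva hfv
  refine ⟨a, l, f a, hatom, hcoord, hfa_pos, ?_⟩
  rw [hl_def, smul_smul, mul_inv_cancel₀ (ne_of_gt hfa_pos), one_smul]
end

section
/- Let X be a Banach lattice and x* a lattice homomorphism with ‖x*‖ = 1. Then x* attains its norm if and only if there exists an increasing sequence (x_n) in the positive part of the closed unit ball of X such that x*(x_n) → 1. -/
/-- a norm-one lattice homomorphism on a Banach lattice attains its norm iff
there is an increasing sequence in the positive part of the unit ball on which the
homomorphism tends to `1`. -/
theorem latticeHom_attains_norm_iff_increasing_sequence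
    {X : Type*} [NormedAddCommGroup X] [Lattice X] [HasSolidNorm X] [IsOrderedAddMonoid X] [NormedSpace ℝ X] [CompleteSpace X]
    (f : X →L[ℝ] ℝ) (hf : IsLatticeHomFunctional f) (hf1 : ‖f‖ = 1) :
    (∃ x : X, ‖x‖ ≤ 1 ∧ |f x| = 1) ↔
      ∃ x : ℕ → X, Monotone x ∧ (∀ n, 0 ≤ x n ∧ ‖x n‖ ≤ 1) ∧
        Filter.Tendsto (fun n => f (x n)) Filter.atTop (nhds 1) := by
  have fabs : ∀ x : X, f |x| = |f x| := by
    intro x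
    have h1 : |x| = x ⊔ -x := rfl
    rw [h1, hf, map_neg]
    exact (abs_eq_max_neg).symm
  constructor
  · rintro ⟨x, hx, hfx⟩
    refine ⟨fun _ => |x|, monotone_const, fun n => ⟨abs_nonneg x, by rwa [norm_abs_eq_norm]⟩, ?_⟩
    simp only [fabs, hfx]
    exact tendsto_const_nhds
  · rintro ⟨x, hmono, hball, htend⟩
    -- f is positive and monotone
    have fpos : ∀ y : X, 0 ≤ y → 0 ≤ f y := by
      intro y hy
      have : f (y ⊔ 0) = max (f y) (f 0) := hf y 0
      rw [sup_eq_left.mpr hy, map_zero] at this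
      rw [this]; exact le_max_right _ _
    have fmonot : ∀ a b : X, a ≤ b → f a ≤ f b := by
      intro a b hab
      have := fpos (b - a) (sub_nonneg.mpr hab)
      have h2 : f (b - a) = f b - f a := map_sub f b a
      linarith [h2 ▸ this]
    have fmin : ∀ a b : X, f (a ⊓ b) = min (f a) (f b) := by
      intro a b
      have h1 : a ⊓ b = a + b - a ⊔ b := by
        rw [eq_sub_iff_add_eq, inf_add_sup]
      rw [h1, map_sub, map_add, hf]
      rcases le_total (f a) (f b) with h | h <;> simp [min_def, max_def, h] <;> ring
    have fle1 : ∀ n, f (x n) ≤ 1 := by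
      intro n
      calc f (x n) ≤ |f (x n)| := le_abs_self _
        _ ≤ ‖f‖ * ‖x n‖ := f.le_opNorm (x n)
        _ ≤ 1 := by rw [hf1, one_mul]; exact (hball n).2
    -- extract indices
    have key : ∀ k : ℕ, ∃ N : ℕ, ∀ n ≥ N, 1 - (1/2 : ℝ)^(k+1) < f (x n) := by
      intro k
      have hε : (0:ℝ) < (1/2:ℝ)^(k+1) := by positivity
      rcases (Metric.tendsto_atTop.mp htend _ hε) with ⟨N, hN⟩
      refine ⟨N, fun n hn => ?_⟩
      have := hN n hn
      rw [Real.dist_eq, abs_lt] at this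
      linarith [this.1]
    choose N hN using key
    set m : ℕ → ℕ := fun k => (Finset.range (k+1)).sum N with hm
    have mmono : Monotone m := by
      intro a b hab
      exact Finset.sum_le_sum_of_subset (Finset.range_subset_range.mpr (by omega))
    have mge : ∀ k, N k ≤ m k := by
      intro k
      exact Finset.single_le_sum (f := N) (fun i _ => Nat.zero_le _) (Finset.self_mem_range_succ k)
    set u : ℕ → X := fun k => x (m k) with hu
    have umono : Monotone u := fun a b hab => hmono (mmono hab)
    have upos : ∀ k, 0 ≤ u k := fun k => (hball (m k)).1
    have unorm : ∀ k, ‖u k‖ ≤ 1 := fun k => (hball (m k)).2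
    have hfu : ∀ k, 1 - (1/2:ℝ)^(k+1) < f (u k) := fun k => hN k (m k) (mge k)
    have hfu1 : ∀ k, f (u k) ≤ 1 := fun k => fle1 (m k)
    have hfu0 : (1/2:ℝ) ≤ f (u 0) := by have := hfu 0; norm_num at this ⊢; linarith
    -- the increments
    set w : ℕ → X := fun k => ((u (k+1) - u k) ⊓ ((1/2:ℝ)^k • u 0)) ⊔ 0 with hw
    have wpos : ∀ k, 0 ≤ w k := fun k => le_sup_right
    have wle : ∀ k, w k ≤ u (k+1) - u k := by
      intro k
      exact sup_le inf_le_left (sub_nonneg.mpr (umono (Nat.le_succ k)))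
    have wnorm : ∀ k, ‖w k‖ ≤ (1/2:ℝ)^k := by
      intro k
      have h1 : |w k| ≤ |(1/2:ℝ)^k • u 0| := by
        rw [abs_of_nonneg (wpos k)]
        exact sup_le (le_trans inf_le_right (le_abs_self _)) (abs_nonneg _)
      calc ‖w k‖ ≤ ‖(1/2:ℝ)^k • u 0‖ := HasSolidNorm.solid h1
        _ = (1/2:ℝ)^k * ‖u 0‖ := by
            rw [norm_smul, Real.norm_eq_abs, abs_of_nonneg (by positivity : (0:ℝ) ≤ (1/2:ℝ)^k)]
        _ ≤ (1/2:ℝ)^k := by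
            nlinarith [unorm 0, pow_nonneg (by norm_num : (0:ℝ) ≤ 1/2) k]
    have fw : ∀ k, f (w k) = f (u (k+1)) - f (u k) := by
      intro k
      have hinc : (0:ℝ) ≤ f (u (k+1)) - f (u k) := by
        have := fmonot (u k) (u (k+1)) (umono (Nat.le_succ k)); linarith
      have h1 : f (u (k+1)) - f (u k) ≤ (1/2:ℝ)^(k+1) := by
        have := hfu k; have := hfu1 (k+1); linarith
      have h2 : (1/2:ℝ)^(k+1) ≤ (1/2:ℝ)^k * f (u 0) := by
        have hk : (0:ℝ) ≤ (1/2:ℝ)^k := by positivity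
        have : (1/2:ℝ)^(k+1) = (1/2:ℝ)^k * (1/2) := by ring
        rw [this]
        nlinarith
      have hmin : f ((u (k+1) - u k) ⊓ ((1/2:ℝ)^k • u 0)) = f (u (k+1)) - f (u k) := by
        rw [fmin, map_sub, map_smul]
        simp only [smul_eq_mul]
        exact min_eq_left (by linarith)
      rw [hw]
      simp only []
      rw [hf, map_zero, hmin]
      exact max_eq_left hinc
    have wsummable : Summable w := by
      apply Summable.of_norm_bounded (summable_geometric_of_lt_one (by norm_num) (by norm_num)) wnorm
    obtain ⟨S, hS⟩ := wsummable
    set xx : X := u 0 + S with hxx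
    set s : ℕ → X := fun K => u 0 + ∑ k ∈ Finset.range K, w k with hs
    have stend : Filter.Tendsto s Filter.atTop (nhds xx) :=
      (hS.tendsto_sum_nat).const_add (u 0)
    have hsle : ∀ K, s K ≤ u K := by
      intro K
      induction K with
      | zero => simp [hs]
      | succ K ih =>
        have h1 : s (K+1) = s K + w K := by
          simp [hs, Finset.sum_range_succ]; abel
        rw [h1]
        calc s K + w K ≤ u K + (u (K+1) - u K) :=
              add_le_add ih (wle K)
          _ = u (K+1) := by abel
    have hspos : ∀ K, 0 ≤ s K :=
      fun K => add_nonneg (upos 0) (Finset.sum_nonneg fun k _ => wpos k)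
    have hsnorm : ∀ K, ‖s K‖ ≤ 1 := by
      intro K
      have h1 : |s K| ≤ |u K| := by
        rw [abs_of_nonneg (hspos K), abs_of_nonneg (upos K)]
        exact hsle K
      exact le_trans (HasSolidNorm.solid h1) (unorm K)
    have hfs : ∀ K, f (s K) = f (u K) := by
      intro K
      rw [hs]
      simp only [map_add, map_sum]
      have : ∑ k ∈ Finset.range K, f (w k) = f (u K) - f (u 0) := by
        rw [← Finset.sum_range_sub (fun k => f (u k)) K]
        exact Finset.sum_congr rfl fun k _ => fw k
      rw [this]; ring
    have hfutend : Filter.Tendsto (fun K => f (u K)) Filter.atTop (nhds 1) := by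
      apply tendsto_of_tendsto_of_tendsto_of_le_of_le
        (g := fun K => 1 - (1/2:ℝ)^(K+1)) (h := fun _ => (1:ℝ))
      · have : Filter.Tendsto (fun K : ℕ => (1/2:ℝ)^(K+1)) Filter.atTop (nhds 0) := by
          have := tendsto_pow_atTop_nhds_zero_of_lt_one (by norm_num : (0:ℝ) ≤ 1/2) (by norm_num : (1/2:ℝ) < 1)
          exact this.comp (Filter.tendsto_add_atTop_nat 1)
        have h2 := (tendsto_const_nhds (x := (1:ℝ)) (f := Filter.atTop (α := ℕ))).sub this
        simpa using h2
      · exact tendsto_const_nhds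
      · exact fun K => le_of_lt (hfu K)
      · exact hfu1
    have hfx : f xx = 1 := by
      have h1 : Filter.Tendsto (fun K => f (s K)) Filter.atTop (nhds (f xx)) :=
        (f.continuous.tendsto xx).comp stend
      have h2 : Filter.Tendsto (fun K => f (s K)) Filter.atTop (nhds 1) := by
        simpa only [hfs] using hfutend
      exact tendsto_nhds_unique h1 h2
    refine ⟨xx, ?_, by rw [hfx]; norm_num⟩
    have : Filter.Tendsto (fun K => ‖s K‖) Filter.atTop (nhds ‖xx‖) := stend.norm
    exact le_of_tendsto this (Filter.Eventually.of_forall hsnorm)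
end
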